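/- Let K ∈ M_d⊗M_d have the form K = Σ_h E_{hh}⊗K_h with K_h ∈ M_d pairwise distinct (K_h ≠ K_{h'} whenever h ≠ h'), suppose Tr₂(K*K) = 1 (K is a conditional density amplitude), and suppose that in M_d⊗M_d⊗M_d, K on the first two factors commutes with K on the last two factors ([K⊗1, 1⊗K] = 0). Then each K_h is a diagonal matrix; more precisely there exist complex numbers κ_{hj} with Σ_j |κ_{hj}|² = 1 for every h such that K = Σ_{h,j} κ_{hj} E_{hh}⊗E_{jj}, so K is diagonalizable and (|κ_{hj}|²) is a stochastic matrix. -/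

import Mathlib

open Matrix BigOperators

/-- Kronecker tensor product of two `d × d` matrices, indexed by `Fin d × Fin d`. -/
noncomputable def mtens {d : ℕ} (A B : Matrix (Fin d) (Fin d) ℂ) :
    Matrix (Fin d × Fin d) (Fin d × Fin d) ℂ :=
  fun p q => A p.1 q.1 * B p.2 q.2

/-- Partial trace over the second tensor factor. -/
noncomputable def ptr2 {d : ℕ} (X : Matrix (Fin d × Fin d) (Fin d × Fin d) ℂ) :
    Matrix (Fin d) (Fin d) ℂ :=
  fun i j => ∑ k, X (i, k) (j, k)

/-- `K ⊗ 1` in `M_d ⊗ M_d ⊗ M_d`: `K` acting on the first two tensor factors. -/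
noncomputable def tensL {d : ℕ} (K : Matrix (Fin d × Fin d) (Fin d × Fin d) ℂ) :
    Matrix (Fin d × Fin d × Fin d) (Fin d × Fin d × Fin d) ℂ :=
  fun p q => K (p.1, p.2.1) (q.1, q.2.1) * (if p.2.2 = q.2.2 then 1 else 0)

/-- `1 ⊗ K` in `M_d ⊗ M_d ⊗ M_d`: `K` acting on the last two tensor factors. -/
noncomputable def tensR {d : ℕ} (K : Matrix (Fin d × Fin d) (Fin d × Fin d) ℂ) :
    Matrix (Fin d × Fin d × Fin d) (Fin d × Fin d × Fin d) ℂ :=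
  fun p q => (if p.1 = q.1 then 1 else 0) * K (p.2.1, p.2.2) (q.2.1, q.2.2)

/-- A conditional density amplitude of the form `K = Σ_h E_{hh} ⊗ K_h`
with pairwise distinct `K_h`, commuting with its right shift, is diagonalizable:
each `K_h` is diagonal and `K = Σ_{h,j} κ_{hj} E_{hh} ⊗ E_{jj}` with `(|κ_{hj}|²)` stochastic. -/
theorem stmt10 {d : ℕ} (hd : 1 ≤ d)
    (Kb : Fin d → Matrix (Fin d) (Fin d) ℂ)
    (hdist : Function.Injective Kb)
    (K : Matrix (Fin d × Fin d) (Fin d × Fin d) ℂ)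
    (hK : K = ∑ h, mtens (Matrix.single h h 1) (Kb h))
    (hCDA : ptr2 (Kᴴ * K) = 1)
    (hshift : tensL K * tensR K = tensR K * tensL K) :
    (∀ h, (Kb h).IsDiag) ∧
    ∃ κ : Fin d → Fin d → ℂ,
      (∀ h, ∑ j, ‖κ h j‖ ^ 2 = 1) ∧
      K = ∑ h, ∑ j, κ h j •
        mtens (Matrix.single h h 1) (Matrix.single j j 1) := by
  have hKe : ∀ i k j l : Fin d, K (i,k) (j,l) = if i = j then Kb i k l else 0 := by
    intro i k j l
    rw [hK]
    simp only [Matrix.sum_apply, mtens, Matrix.single, Matrix.of_apply]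
    rw [Finset.sum_eq_single i]
    · by_cases h : i = j <;> simp [h]
    · intro h _ hne
      have : ¬(h = i ∧ h = j) := fun hh => hne hh.1
      simp [this]
    · simp
  have hcomm : ∀ a b c x y : Fin d, Kb a b c * Kb c x y = Kb a b c * Kb b x y := by
    intro a b c x y
    have h2 := congrFun (congrFun hshift (a, b, x)) (a, c, y)
    simp only [Matrix.mul_apply, tensL, tensR, hKe, Fintype.sum_prod_type,
      mul_ite, ite_mul, mul_zero, zero_mul, mul_one, one_mul,
      Finset.sum_ite_eq, Finset.sum_ite_eq', Finset.sum_ite_irrel,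
      Finset.sum_const_zero, Finset.mem_univ, if_true] at h2
    exact h2.trans (mul_comm _ _)
  have hdiag : ∀ h, (Kb h).IsDiag := by
    intro a b c hbc
    by_contra hne
    have hbc' : Kb c = Kb b := by
      funext x y
      exact mul_left_cancel₀ hne (hcomm a b c x y)
    exact hbc (hdist hbc').symm
  refine ⟨hdiag, fun h j => Kb h j j, ?_, ?_⟩
  · intro h
    have h3 := congrFun (congrFun hCDA h) h
    simp only [ptr2, Matrix.mul_apply, Matrix.conjTranspose_apply, hKe,
      Fintype.sum_prod_type, Matrix.one_apply_eq, map_zero,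
      mul_ite, ite_mul, mul_zero, zero_mul,
      Finset.sum_ite_eq, Finset.sum_ite_eq', Finset.sum_ite_irrel,
      Finset.sum_const_zero, Finset.mem_univ, if_true] at h3
    -- h3 should now say : ∑ k, ∑ b, conj (Kb h b k) * Kb h b k = 1 (roughly)
    have h4 : ∑ k, (starRingEnd ℂ) (Kb h k k) * Kb h k k = 1 := by
      rw [← h3]
      refine Finset.sum_congr rfl fun k _ => ?_
      have hz : ∀ b ∈ Finset.univ, b ≠ k → star (Kb h b k) * Kb h b k = 0 := by
        intro b _ hb
        rw [hdiag h hb]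
        simp
      rw [Finset.sum_eq_single k hz (fun hk => absurd (Finset.mem_univ k) hk)]
      rfl
    have h5 : ((∑ j, ‖Kb h j j‖ ^ 2 : ℝ) : ℂ) = 1 := by
      push_cast
      rw [← h4]
      refine Finset.sum_congr rfl fun k _ => ?_
      rw [mul_comm, Complex.mul_conj]
      norm_cast
      simp [Complex.normSq_eq_norm_sq]
    exact_mod_cast h5
  · funext p q
    obtain ⟨i, k⟩ := p
    obtain ⟨j, l⟩ := q
    simp only [Matrix.sum_apply, Matrix.smul_apply, mtens, Matrix.single,
      Matrix.of_apply, smul_eq_mul, mul_ite, ite_mul, mul_zero, zero_mul, mul_one,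
      Finset.sum_ite_eq, Finset.sum_ite_eq', Finset.sum_ite_irrel,
      Finset.sum_const_zero, Finset.mem_univ, if_true]
    rw [hKe]
    by_cases hij : i = j
    · subst hij
      by_cases hkl : k = l
      · subst hkl
        simp [Finset.sum_ite_eq', Finset.sum_ite_irrel, Finset.sum_const_zero]
      · have hdz : Kb i k l = 0 := hdiag i hkl
        have hcond : ∀ x1 : Fin d, ¬(x1 = k ∧ x1 = l) := by
          rintro x1 ⟨rfl, rfl⟩; exact hkl rfl
        simp [hdz, hcond]
    · have hcond : ∀ x : Fin d, ¬(x = i ∧ x = j) := by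
        rintro x ⟨rfl, rfl⟩; exact hij rfl
      simp [hij, hcond]
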